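/- If bounded operators Φ and Ψ on a Hilbert space satisfy ΦΦ† = 1 + ΨΨ† and Φ†Φ = 1 + Ψ^T Ψ̄ (the bosonic Bogolyubov relations), then Φ has a bounded inverse and the operator X := Ψ̄Φ⁻¹ satisfies ‖X‖ < 1. -/

import Mathlib

open ContinuousLinearMap
open scoped InnerProductSpace

/-- If bounded operators Φ and Ψ on a complex Hilbert space satisfy the bosonic
Bogolyubov relations ΦΦ† = 1 + ΨΨ† and Φ†Φ = 1 + Ψᵀ Ψ̄ (where the bar is conjugation with
respect to a fixed antiunitary conjugation `J` and Ψᵀ = (Ψ̄)†), then Φ has a bounded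
(two-sided) inverse and X := Ψ̄ Φ⁻¹ satisfies ‖X‖ < 1. -/
theorem bosonic_bogolyubov_inverse_norm_lt_one
    {H : Type*} [NormedAddCommGroup H] [InnerProductSpace ℂ H] [CompleteSpace H]
    (J : H → H)
    (hJadd : ∀ x y, J (x + y) = J x + J y)
    (hJsmul : ∀ (c : ℂ) (x : H), J (c • x) = (starRingEnd ℂ) c • J x)
    (hJinv : ∀ x, J (J x) = x)
    (hJnorm : ∀ x, ‖J x‖ = ‖x‖)
    (Φ Ψ Ψbar ΨT : H →L[ℂ] H)
    (hbar : ∀ x, Ψbar x = J (Ψ (J x)))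
    (hT : ΨT = adjoint Ψbar)
    (h1 : Φ ∘L adjoint Φ = 1 + Ψ ∘L adjoint Ψ)
    (h2 : adjoint Φ ∘L Φ = 1 + ΨT ∘L Ψbar) :
    ∃ Φinv : H →L[ℂ] H, Φ ∘L Φinv = 1 ∧ Φinv ∘L Φ = 1 ∧ ‖Ψbar ∘L Φinv‖ < 1 := by
  -- Key identity from h2: ‖Φ x‖² = ‖x‖² + ‖Ψbar x‖²
  have key : ∀ x : H, ‖Φ x‖ ^ 2 = ‖x‖ ^ 2 + ‖Ψbar x‖ ^ 2 := by
    intro x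
    have e : (adjoint Φ ∘L Φ) x = (1 + ΨT ∘L Ψbar) x := by rw [h2]
    simp only [comp_apply, add_apply, one_apply_eq_self, hT] at e
    have e2 := congrArg (fun y => (⟪y, x⟫_ℂ)) e
    simp only [adjoint_inner_left, inner_add_left] at e2
    rw [inner_self_eq_norm_sq_to_K, inner_self_eq_norm_sq_to_K,
      inner_self_eq_norm_sq_to_K] at e2
    exact_mod_cast e2
  -- Key identity from h1: ‖Φ† y‖² = ‖y‖² + ‖Ψ† y‖²
  have key' : ∀ y : H, ‖adjoint Φ y‖ ^ 2 = ‖y‖ ^ 2 + ‖adjoint Ψ y‖ ^ 2 := by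
    intro y
    have e : (Φ ∘L adjoint Φ) y = (1 + Ψ ∘L adjoint Ψ) y := by rw [h1]
    simp only [comp_apply, add_apply, one_apply_eq_self] at e
    have e2 := congrArg (fun z => (⟪y, z⟫_ℂ)) e
    simp only [inner_add_right] at e2
    rw [← adjoint_inner_left Φ, ← adjoint_inner_left Ψ,
      inner_self_eq_norm_sq_to_K, inner_self_eq_norm_sq_to_K,
      inner_self_eq_norm_sq_to_K] at e2
    exact_mod_cast e2
  -- Φ is bounded below with constant 1
  have hlow : ∀ x : H, ‖x‖ ≤ ‖Φ x‖ := by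
    intro x
    nlinarith [key x, norm_nonneg x, norm_nonneg (Φ x), norm_nonneg (Ψbar x)]
  have hal : AntilipschitzWith 1 Φ :=
    Φ.antilipschitz_of_bound (fun x => by simpa using hlow x)
  -- Φ has dense range
  have hdense : Φ.range.topologicalClosure = ⊤ := by
    rw [Submodule.topologicalClosure_eq_top_iff, Submodule.eq_bot_iff]
    intro y hy
    have h0 : adjoint Φ y = 0 := by
      rw [← inner_self_eq_zero (𝕜 := ℂ)]
      rw [adjoint_inner_right]
      exact hy (Φ (adjoint Φ y)) ⟨adjoint Φ y, rfl⟩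
    have := key' y
    rw [h0, norm_zero] at this
    have hy0 : ‖y‖ = 0 := by nlinarith [norm_nonneg y, norm_nonneg (adjoint Ψ y), sq_nonneg ‖y‖]
    exact norm_eq_zero.mp hy0
  have hbij : Function.Bijective Φ :=
    (Φ.bijective_iff_dense_range_and_antilipschitz).mpr ⟨hdense, 1, hal⟩
  -- construct the continuous inverse
  let E : H ≃L[ℂ] H := ContinuousLinearEquiv.ofBijective Φ
    (LinearMap.ker_eq_bot.mpr hbij.1) (LinearMap.range_eq_top.mpr hbij.2)
  have hE : ∀ x, E x = Φ x := fun x => rfl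
  refine ⟨(E.symm : H →L[ℂ] H), ?_, ?_, ?_⟩
  · ext x
    simp only [comp_apply, one_apply_eq_self, ContinuousLinearEquiv.coe_coe]
    rw [← hE]
    exact E.apply_symm_apply x
  · ext x
    simp only [comp_apply, one_apply_eq_self, ContinuousLinearEquiv.coe_coe]
    rw [← hE]
    exact E.symm_apply_apply x
  · rcases subsingleton_or_nontrivial H with hs | hn
    · have : (Ψbar ∘L (E.symm : H →L[ℂ] H)) = 0 := Subsingleton.elim _ _
      rw [this, norm_zero]; norm_num
    · -- ‖Φ‖ ≥ 1
      obtain ⟨x0, hx0⟩ := exists_ne (0 : H)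
      have hc1 : 1 ≤ ‖Φ‖ := by
        have h1' : ‖x0‖ ≤ ‖Φ x0‖ := hlow x0
        have h2' : ‖Φ x0‖ ≤ ‖Φ‖ * ‖x0‖ := Φ.le_opNorm x0
        have hx0' : 0 < ‖x0‖ := norm_pos_iff.mpr hx0
        nlinarith
      have hcpos : 0 < ‖Φ‖ := lt_of_lt_of_le one_pos hc1
      set c : ℝ := ‖Φ‖ with hc
      set b : ℝ := Real.sqrt (1 - c⁻¹ ^ 2) with hb
      have hb0 : 0 ≤ b := Real.sqrt_nonneg _
      have hinv2 : 0 < c⁻¹ ^ 2 := by positivity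
      have hinvle : c⁻¹ ^ 2 ≤ 1 := by
        have : c⁻¹ ≤ 1 := by
          rw [inv_le_one_iff₀]; right; exact hc1
        nlinarith [inv_pos.mpr hcpos]
      have hbound : ‖Ψbar ∘L (E.symm : H →L[ℂ] H)‖ ≤ b := by
        apply opNorm_le_bound _ hb0
        intro y
        set x : H := E.symm y with hx
        have hxy : Φ x = y := by rw [← hE]; exact E.apply_symm_apply y
        have hkey := key x
        rw [hxy] at hkey
        -- ‖x‖ ≥ c⁻¹ ‖y‖
        have hylex : ‖y‖ ≤ c * ‖x‖ := by rw [← hxy]; exact Φ.le_opNorm x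
        have hxge : c⁻¹ * ‖y‖ ≤ ‖x‖ := by
          rw [inv_mul_le_iff₀ hcpos] at *
          linarith
        have hsq : ‖Ψbar x‖ ^ 2 ≤ (1 - c⁻¹ ^ 2) * ‖y‖ ^ 2 := by
          have : (c⁻¹ * ‖y‖) ^ 2 ≤ ‖x‖ ^ 2 := by
            apply pow_le_pow_left₀ (by positivity) hxge _
          nlinarith
        have hb2 : b ^ 2 = 1 - c⁻¹ ^ 2 := Real.sq_sqrt (by linarith)
        have : ‖Ψbar x‖ ^ 2 ≤ (b * ‖y‖) ^ 2 := by
          rw [mul_pow, hb2]; exact hsq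
        simp only [comp_apply, ContinuousLinearEquiv.coe_coe, ← hx]
        nlinarith [norm_nonneg (Ψbar x), norm_nonneg y, mul_nonneg hb0 (norm_nonneg y)]
      have hblt : b < 1 := by
        rw [hb, Real.sqrt_lt' one_pos]
        nlinarith
      linarith
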